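/- Let R be a commutative local ring in which 2 is invertible and take m = 1. Then the subgroup { I_n ⊕ g : g ∈ O_R(h) } of O_R(q ⊥ h) (where g acts on the coordinates (x₁, f₁) of the hyperbolic plane and I_n on the z-block) normalizes the DSER elementary orthogonal group EO_R(q, h). -/

import Mathlib

/-!
STATEMENT 4: Let R be a commutative local ring in which 2 is invertible and take m = 1.
Then the subgroup { I_n ⊕ g : g ∈ O_R(h) } of O_R(q ⊥ h) (with g acting on the coordinates
(x₁, f₁) of the hyperbolic plane and I_n on the z-block) normalizes the DSER elementary
orthogonal group EO_R(q, h).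
-/

namespace DSERMat

open Matrix

variable {R : Type*} [CommRing R] [Invertible (2 : R)]

/-- Index type for `Q ⊥ h^m`: the `z`-block, then the `x`-block, then the `f`-block. -/
abbrev Ind (n m : ℕ) := Fin n ⊕ (Fin m ⊕ Fin m)

variable {n m : ℕ}

/-- The Gram matrix `Φ = diag(φ, [[0, I_m],[I_m, 0]])` of `q ⊥ h^m`. -/
def Phi (φ : Matrix (Fin n) (Fin n) R) (m : ℕ) : Matrix (Ind n m) (Ind n m) R :=
  fromBlocks φ 0 0 (fromBlocks 0 1 1 0)

/-- The elementary matrix `E_α = [[I_n, 0, −α*],[α, I_m, −(1/2)αα*],[0, 0, I_m]]`,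
where `α* = φ⁻¹αᵀ`. -/
def Emat (φ : Matrix (Fin n) (Fin n) R) [Invertible φ] (α : Matrix (Fin m) (Fin n) R) :
    Matrix (Ind n m) (Ind n m) R :=
  fromBlocks 1 (fromCols 0 (-(⅟φ * αᵀ))) (fromRows α 0)
    (fromBlocks 1 (-((⅟(2:R)) • (α * (⅟φ * αᵀ)))) 0 1)

/-- The elementary matrix `E*_β = [[I_n, −β*, 0],[0, I_m, 0],[β, −(1/2)ββ*, I_m]]`,
where `β* = φ⁻¹βᵀ`. -/
def EmatStar (φ : Matrix (Fin n) (Fin n) R) [Invertible φ] (β : Matrix (Fin m) (Fin n) R) :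
    Matrix (Ind n m) (Ind n m) R :=
  fromBlocks 1 (fromCols (-(⅟φ * βᵀ)) 0) (fromRows 0 β)
    (fromBlocks 1 0 (-((⅟(2:R)) • (β * (⅟φ * βᵀ)))) 1)

/-- The orthogonal group `O_R(q ⊥ h^m)` of the form `Φ`, as a subgroup of the units of the
matrix ring. -/
def OGrp (φ : Matrix (Fin n) (Fin n) R) (m : ℕ) : Subgroup (Matrix (Ind n m) (Ind n m) R)ˣ where
  carrier := {g | (g : Matrix (Ind n m) (Ind n m) R)ᵀ * Phi φ m * g = Phi φ m}
  one_mem' := by simp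
  mul_mem' := fun {a b} ha hb => by
    show ((↑(a * b) : Matrix (Ind n m) (Ind n m) R))ᵀ * Phi φ m * (↑(a * b) : Matrix _ _ R)
        = Phi φ m
    rw [Units.val_mul, transpose_mul]
    calc (b : Matrix (Ind n m) (Ind n m) R)ᵀ * (a : Matrix _ _ R)ᵀ * Phi φ m *
          ((a : Matrix _ _ R) * (b : Matrix _ _ R))
        = (b : Matrix (Ind n m) (Ind n m) R)ᵀ *
            ((a : Matrix _ _ R)ᵀ * Phi φ m * (a : Matrix _ _ R)) * (b : Matrix _ _ R) := by
          simp only [mul_assoc]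
      _ = Phi φ m := by rw [ha, hb]
  inv_mem' := fun {a} ha => by
    show ((↑a⁻¹ : Matrix (Ind n m) (Ind n m) R))ᵀ * Phi φ m * (↑a⁻¹ : Matrix _ _ R) = Phi φ m
    conv_lhs => rw [← ha]
    calc (↑a⁻¹ : Matrix (Ind n m) (Ind n m) R)ᵀ *
          ((a : Matrix _ _ R)ᵀ * Phi φ m * (a : Matrix _ _ R)) * (↑a⁻¹ : Matrix _ _ R)
        = ((a : Matrix (Ind n m) (Ind n m) R) * (↑a⁻¹ : Matrix _ _ R))ᵀ * Phi φ m *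
            ((a : Matrix _ _ R) * (↑a⁻¹ : Matrix _ _ R)) := by
          rw [transpose_mul]; simp only [mul_assoc]
      _ = Phi φ m := by
          rw [← Units.val_mul, mul_inv_cancel]; simp

/-- The set of elementary generators `E_α`, `E*_β` inside the unit group. -/
def ElemSet (φ : Matrix (Fin n) (Fin n) R) [Invertible φ] (m : ℕ) :
    Set (Matrix (Ind n m) (Ind n m) R)ˣ :=
  {g | ∃ α : Matrix (Fin m) (Fin n) R,
    (g : Matrix (Ind n m) (Ind n m) R) = Emat φ α ∨
    (g : Matrix (Ind n m) (Ind n m) R) = EmatStar φ α}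

/-- The DSER elementary orthogonal group `EO_R(q, h^m)`. -/
def EOGrp (φ : Matrix (Fin n) (Fin n) R) [Invertible φ] (m : ℕ) :
    Subgroup (Matrix (Ind n m) (Ind n m) R)ˣ :=
  Subgroup.closure (ElemSet φ m)

/-- The matrix of an automorphism of a smaller block of coordinates, embedded (via the
coordinate injection `u`) as an automorphism of everything, acting as the identity on the
remaining coordinates. -/
def embMat {J : Type*} [Fintype J] [DecidableEq J] {I : Type*} [Fintype I] [DecidableEq I]
    (u : J → I) (A : Matrix J J R) : Matrix I I R :=
  (fun i j => ∑ a : J, ∑ b : J, if i = u a ∧ j = u b then A a b else 0) +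
    fun i j => if i = j ∧ ¬(∃ a : J, u a = i) then 1 else 0

end DSERMat

section MyAux
open Matrix DSERMat
variable {R : Type*} [CommRing R] [Invertible (2 : R)]

lemma half_of_two_mul (x : R) (h : (2:R) * x = 0) : x = 0 := by
  calc x = ⅟(2:R) * ((2:R) * x) := by rw [← mul_assoc, invOf_mul_self, one_mul]
  _ = 0 := by rw [h, mul_zero]

lemma myClassify [IsLocalRing R]
    (g : Matrix (Fin 2) (Fin 2) R)
    (hg : gᵀ * !![(0:R), 1; 1, 0] * g = !![(0:R), 1; 1, 0]) :
    (∃ a d : R, a * d = 1 ∧ g = !![a, 0; 0, d]) ∨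
    (∃ b c : R, b * c = 1 ∧ g = !![0, b; c, 0]) := by
  set a := g 0 0 with ha
  set b := g 0 1 with hb
  set c := g 1 0 with hc
  set d := g 1 1 with hd
  have h : ∀ i j, (gᵀ * !![(0:R), 1; 1, 0] * g) i j = (!![(0:R), 1; 1, 0]) i j := by
    intro i j; rw [hg]
  have h00 := h 0 0
  have h01 := h 0 1
  have h11 := h 1 1
  simp [Matrix.mul_apply, Fin.sum_univ_two, Matrix.transpose_apply,
    ← ha, ← hb, ← hc, ← hd] at h00 h01 h11
  have hac : a * c = 0 := half_of_two_mul _ (by linear_combination h00)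
  have hbd : b * d = 0 := half_of_two_mul _ (by linear_combination h11)
  have hsum : a * d + b * c = 1 := by linear_combination h01
  have hprod : (a * d) * (b * c) = 0 := by
    calc (a*d)*(b*c) = (a*c)*(b*d) := by ring
    _ = 0 := by rw [hac, hbd, mul_zero]
  rcases IsLocalRing.isUnit_or_isUnit_of_add_one hsum with hu | hu
  · left
    obtain ⟨u, hu⟩ := hu
    have hbc : b * c = 0 := by
      have : (u : R) * (b * c) = 0 := by rw [hu]; exact hprod
      have := congrArg (fun t => (↑u⁻¹ : R) * t) this
      simpa [← mul_assoc] using this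
    have had : a * d = 1 := by linear_combination hsum - hbc
    have hcz : c = 0 := by
      calc c = (a * d) * c := by rw [had, one_mul]
      _ = d * (a * c) := by ring
      _ = 0 := by rw [hac, mul_zero]
    have hbz : b = 0 := by
      calc b = (a * d) * b := by rw [had, one_mul]
      _ = a * (b * d) := by ring
      _ = 0 := by rw [hbd, mul_zero]
    exact ⟨a, d, had, by ext i j; fin_cases i <;> fin_cases j <;>
      simp [← ha, ← hb, ← hc, ← hd, hbz, hcz]⟩
  · right
    obtain ⟨u, hu⟩ := hu
    have had : a * d = 0 := by
      have : (u : R) * (a * d) = 0 := by rw [hu]; linear_combination hprod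
      have := congrArg (fun t => (↑u⁻¹ : R) * t) this
      simpa [← mul_assoc] using this
    have hbc : b * c = 1 := by linear_combination hsum - had
    have haz : a = 0 := by
      calc a = (b * c) * a := by rw [hbc, one_mul]
      _ = b * (a * c) := by ring
      _ = 0 := by rw [hac, mul_zero]
    have hdz : d = 0 := by
      calc d = (b * c) * d := by rw [hbc, one_mul]
      _ = c * (b * d) := by ring
      _ = 0 := by rw [hbd, mul_zero]
    exact ⟨b, c, hbc, by ext i j; fin_cases i <;> fin_cases j <;>
      simp [← ha, ← hb, ← hc, ← hd, haz, hdz]⟩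



variable {R : Type*} [CommRing R] [Invertible (2 : R)] {n m : ℕ}

/-- helper: `I_n ⊕ [[p,q],[r,s]]` with scalar blocks on the hyperbolic coordinates. -/
def Wm (p q r s : R) : Matrix (Ind n m) (Ind n m) R :=
  fromBlocks 1 0 0 (fromBlocks (p • 1) (q • 1) (r • 1) (s • 1))

lemma embMat_apply {J : Type*} [Fintype J] [DecidableEq J] {I : Type*} [Fintype I]
    [DecidableEq I] (u : J → I) (A : Matrix J J R) (i j : I) :
    embMat u A i j =
      (∑ a : J, ∑ b : J, if i = u a ∧ j = u b then A a b else 0) +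
        (if i = j ∧ ¬(∃ a : J, u a = i) then 1 else 0) := rfl

lemma embMat_eq (g : Matrix (Fin 2) (Fin 2) R) :
    (embMat (![Sum.inr (Sum.inl 0), Sum.inr (Sum.inr 0)] : Fin 2 → Ind n 1) g) =
      (Wm (g 0 0) (g 0 1) (g 1 0) (g 1 1) : Matrix (Ind n 1) (Ind n 1) R) := by
  ext i j
  simp only [embMat_apply]
  rcases i with i | i | i <;> rcases j with j | j | j <;>
    simp [Wm, Fin.sum_univ_two, fromBlocks, Matrix.one_apply,
      Fin.fin_one_eq_zero, Fin.forall_fin_two]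

lemma Wm_mul_Wm (p q r s p' q' r' s' : R) :
    (Wm p q r s : Matrix (Ind n m) (Ind n m) R) * Wm p' q' r' s' =
      Wm (p*p' + q*r') (p*q' + q*s') (r*p' + s*r') (r*q' + s*s') := by
  simp [Wm, fromBlocks_multiply, smul_smul, add_smul, smul_add, mul_comm]

lemma conj_Emat (φ : Matrix (Fin n) (Fin n) R) [Invertible φ]
    (a d : R) (h : a * d = 1) (α : Matrix (Fin m) (Fin n) R) :
    (Wm a 0 0 d : Matrix (Ind n m) (Ind n m) R) * Emat φ α * Wm d 0 0 a =
      Emat φ (a • α) := by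
  have h' : d * a = 1 := by rw [mul_comm]; exact h
  simp [Wm, Emat, fromBlocks_multiply, fromBlocks_mul_fromRows, fromCols_mul_fromBlocks,
    Matrix.smul_mul, Matrix.mul_smul, smul_smul, h, h', transpose_smul,
    smul_comm]
  congr 1
  ring

lemma conj_EmatStar (φ : Matrix (Fin n) (Fin n) R) [Invertible φ]
    (a d : R) (h : a * d = 1) (β : Matrix (Fin m) (Fin n) R) :
    (Wm a 0 0 d : Matrix (Ind n m) (Ind n m) R) * EmatStar φ β * Wm d 0 0 a =
      EmatStar φ (d • β) := by
  have h' : d * a = 1 := by rw [mul_comm]; exact h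
  simp [Wm, EmatStar, fromBlocks_multiply, fromBlocks_mul_fromRows, fromCols_mul_fromBlocks,
    Matrix.smul_mul, Matrix.mul_smul, smul_smul, h, h', transpose_smul,
    smul_comm]
  congr 1
  ring

lemma conj_Emat' (φ : Matrix (Fin n) (Fin n) R) [Invertible φ]
    (b c : R) (h : b * c = 1) (α : Matrix (Fin m) (Fin n) R) :
    (Wm 0 b c 0 : Matrix (Ind n m) (Ind n m) R) * Emat φ α * Wm 0 b c 0 =
      EmatStar φ (c • α) := by
  have h' : c * b = 1 := by rw [mul_comm]; exact h
  simp [Wm, Emat, EmatStar, fromBlocks_multiply, fromBlocks_mul_fromRows,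
    fromCols_mul_fromBlocks,
    Matrix.smul_mul, Matrix.mul_smul, smul_smul, h, h', transpose_smul,
    smul_comm]
  congr 1
  ring

lemma conj_EmatStar' (φ : Matrix (Fin n) (Fin n) R) [Invertible φ]
    (b c : R) (h : b * c = 1) (β : Matrix (Fin m) (Fin n) R) :
    (Wm 0 b c 0 : Matrix (Ind n m) (Ind n m) R) * EmatStar φ β * Wm 0 b c 0 =
      Emat φ (b • β) := by
  have h' : c * b = 1 := by rw [mul_comm]; exact h
  simp [Wm, Emat, EmatStar, fromBlocks_multiply, fromBlocks_mul_fromRows,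
    fromCols_mul_fromBlocks,
    Matrix.smul_mul, Matrix.mul_smul, smul_smul, h, h', transpose_smul,
    smul_comm]
  congr 1
  ring

lemma Wm_one : (Wm 1 0 0 1 : Matrix (Ind n m) (Ind n m) R) = 1 := by
  simp [Wm, ← fromBlocks_one]

lemma unit_inv_eq {M : Type*} [Monoid M] (G : Mˣ) (H : M) (h : (G : M) * H = 1) :
    ((G⁻¹ : Mˣ) : M) = H := by
  calc ((G⁻¹ : Mˣ) : M) = (G⁻¹ : Mˣ) * ((G : M) * H) := by rw [h, mul_one]
  _ = (((G⁻¹ : Mˣ) : M) * (G : M)) * H := by rw [mul_assoc]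
  _ = H := by rw [Units.inv_mul, one_mul]

end MyAux

open DSERMat Matrix in
/-- Here a member of the embedded copy of `O_R(h)` is any unit `G` of the
matrix ring whose underlying matrix is `I_n ⊕ g` for some `g ∈ O_R(h)`, where `g` acts on
the two hyperbolic coordinates `(x₁, f₁)` and the identity on the `z`-block; every such
unit normalizes `EO_R(q, h)`. -/
theorem dser_O_h_normalizes_EO_local_m_one
    (R : Type*) [CommRing R] [IsLocalRing R] [Invertible (2 : R)]
    (n : ℕ) (hn : 1 ≤ n)
    (φ : Matrix (Fin n) (Fin n) R) [Invertible φ] (hφ : φ.IsSymm)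
    (g : Matrix (Fin 2) (Fin 2) R)
    (hg : gᵀ * !![(0:R), 1; 1, 0] * g = !![(0:R), 1; 1, 0])
    (G : (Matrix (Ind n 1) (Ind n 1) R)ˣ)
    (hG : (G : Matrix (Ind n 1) (Ind n 1) R) =
      embMat (![Sum.inr (Sum.inl 0), Sum.inr (Sum.inr 0)] : Fin 2 → Ind n 1) g) :
    ∀ x ∈ EOGrp φ 1, G * x * G⁻¹ ∈ EOGrp φ 1 := by
  intro x hx
  have key : ∀ y : (Matrix (Ind n 1) (Ind n 1) R)ˣ, y ∈ ElemSet φ 1 →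
      G * y * G⁻¹ ∈ EOGrp φ 1 := by
    intro y hy
    obtain ⟨α, hy⟩ := hy
    rcases myClassify g hg with ⟨a, d, had, hge⟩ | ⟨b, c, hbc, hge⟩
    · have hGW : (G : Matrix (Ind n 1) (Ind n 1) R) = Wm a 0 0 d := by
        rw [hG, embMat_eq, hge]
        norm_num
      have hprod : (G : Matrix (Ind n 1) (Ind n 1) R) * Wm d 0 0 a = 1 := by
        rw [hGW, Wm_mul_Wm]
        simpa [had, mul_comm d a] using Wm_one (R := R) (n := n) (m := 1)
      have hGinv : ((G⁻¹ : _ˣ) : Matrix (Ind n 1) (Ind n 1) R) = Wm d 0 0 a :=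
        unit_inv_eq G _ hprod
      rcases hy with hy | hy
      · have hmat : ((G * y * G⁻¹ : _ˣ) : Matrix (Ind n 1) (Ind n 1) R) =
            Emat φ (a • α) := by
          rw [Units.val_mul, Units.val_mul, hGW, hy, hGinv, conj_Emat φ a d had α]
        exact Subgroup.subset_closure ⟨a • α, Or.inl hmat⟩
      · have hmat : ((G * y * G⁻¹ : _ˣ) : Matrix (Ind n 1) (Ind n 1) R) =
            EmatStar φ (d • α) := by
          rw [Units.val_mul, Units.val_mul, hGW, hy, hGinv, conj_EmatStar φ a d had α]
        exact Subgroup.subset_closure ⟨d • α, Or.inr hmat⟩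
    · have hGW : (G : Matrix (Ind n 1) (Ind n 1) R) = Wm 0 b c 0 := by
        rw [hG, embMat_eq, hge]
        norm_num
      have hprod : (G : Matrix (Ind n 1) (Ind n 1) R) * Wm 0 b c 0 = 1 := by
        rw [hGW, Wm_mul_Wm]
        simpa [hbc, mul_comm c b] using Wm_one (R := R) (n := n) (m := 1)
      have hGinv : ((G⁻¹ : _ˣ) : Matrix (Ind n 1) (Ind n 1) R) = Wm 0 b c 0 :=
        unit_inv_eq G _ hprod
      rcases hy with hy | hy
      · have hmat : ((G * y * G⁻¹ : _ˣ) : Matrix (Ind n 1) (Ind n 1) R) =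
            EmatStar φ (c • α) := by
          rw [Units.val_mul, Units.val_mul, hGW, hy, hGinv, conj_Emat' φ b c hbc α]
        exact Subgroup.subset_closure ⟨c • α, Or.inr hmat⟩
      · have hmat : ((G * y * G⁻¹ : _ˣ) : Matrix (Ind n 1) (Ind n 1) R) =
            Emat φ (b • α) := by
          rw [Units.val_mul, Units.val_mul, hGW, hy, hGinv, conj_EmatStar' φ b c hbc α]
        exact Subgroup.subset_closure ⟨b • α, Or.inl hmat⟩
  have hx' : x ∈ Subgroup.closure (ElemSet φ 1) := hx
  refine Subgroup.closure_induction (p := fun y _ => G * y * G⁻¹ ∈ EOGrp φ 1)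
    key ?_ ?_ ?_ hx'
  · simpa using one_mem (EOGrp φ 1)
  · intro u v _ _ pu pv
    have : G * (u * v) * G⁻¹ = (G * u * G⁻¹) * (G * v * G⁻¹) := by group
    rw [this]; exact mul_mem pu pv
  · intro u _ pu
    have : G * u⁻¹ * G⁻¹ = (G * u * G⁻¹)⁻¹ := by group
    rw [this]; exact inv_mem pu
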